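/- (Okounkov–Vershik) The Gelfand–Zetlin algebra equals the algebra generated by the Jucys–Murphy elements: the subalgebra of A generated by Z_1 ∪ Z_2 ∪ … ∪ Z_n equals the subalgebra of A generated by {J_1, …, J_n}. -/

import Mathlib

/-- The Jucys–Murphy element `J_{i+1}` (1-based: `J_1 = 0`,
`J_i = (1,i) + ⋯ + (i-1,i)`) in the complex group algebra of `S_n`. -/
noncomputable def jm (n : ℕ) (i : Fin n) : MonoidAlgebra ℂ (Equiv.Perm (Fin n)) :=
  ∑ k ∈ Finset.univ.filter (fun k => k < i),
    MonoidAlgebra.of ℂ (Equiv.Perm (Fin n)) (Equiv.swap k i)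

/-- The canonical copy of `ℂ[S_i]` inside `ℂ[S_n]`: the linear span of the
permutations fixing every point of `{i+1,…,n}` (1-based; in the 0-based indexing of
`Fin n`, the points `k` with `i ≤ k`). Since this set of permutations is a subgroup,
this span is a subalgebra. -/
noncomputable def groupAlgCopy (n i : ℕ) :
    Submodule ℂ (MonoidAlgebra ℂ (Equiv.Perm (Fin n))) :=
  Submodule.span ℂ
    { x | ∃ σ : Equiv.Perm (Fin n), (∀ k : Fin n, i ≤ (k : ℕ) → σ k = k) ∧
        x = MonoidAlgebra.of ℂ (Equiv.Perm (Fin n)) σ }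

/-- The center `Z_i` of the canonical copy of `ℂ[S_i]` inside `ℂ[S_n]`: the set of
elements of that copy commuting with every element of the copy. -/
noncomputable def centerCopy (n i : ℕ) : Set (MonoidAlgebra ℂ (Equiv.Perm (Fin n))) :=
  { x | x ∈ groupAlgCopy n i ∧ ∀ y ∈ groupAlgCopy n i, x * y = y * x }

noncomputable section OVAux

open Equiv Equiv.Perm Finset MonoidAlgebra

namespace OV

abbrev A (n : ℕ) : Type := MonoidAlgebra ℂ (Equiv.Perm (Fin n))

instance (n : ℕ) : CoeFun (A n) (fun _ => Equiv.Perm (Fin n) → ℂ) := ⟨fun x => x.coeff⟩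

lemma _root_.Equiv.Perm.inv_apply_self {α : Type*} (f : Equiv.Perm α) (x : α) :
    f⁻¹ (f x) = x := f.symm_apply_apply x

lemma _root_.Equiv.Perm.apply_inv_self {α : Type*} (f : Equiv.Perm α) (x : α) :
    f (f⁻¹ x) = x := f.apply_symm_apply x

variable {n : ℕ}

def og {n : ℕ} (σ : Equiv.Perm (Fin n)) : A n := MonoidAlgebra.of ℂ _ σ

/-- The subgroup of permutations fixing every point `≥ i`. -/
def Hi (n i : ℕ) : Subgroup (Equiv.Perm (Fin n)) where
  carrier := {σ | ∀ k : Fin n, i ≤ (k : ℕ) → σ k = k}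
  one_mem' := by intro k _; rfl
  mul_mem' := by
    intro a b ha hb k hk
    simp only [Equiv.Perm.mul_apply, hb k hk, ha k hk]
  inv_mem' := by
    intro a ha k hk
    conv_lhs => rw [← ha k hk]
    simp

lemma og_mul (σ τ : Equiv.Perm (Fin n)) : og (σ * τ) = og σ * og τ := by
  simp [og]

lemma og_apply (σ τ : Equiv.Perm (Fin n)) : og σ τ = if σ = τ then 1 else 0 := by
  simp [og, MonoidAlgebra.of_apply, Finsupp.single_apply]

lemma copy_eq_supported (i : ℕ) :
    groupAlgCopy n i = MonoidAlgebra.supported ℂ ℂ (Hi n i : Set (Equiv.Perm (Fin n))) := by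
  rw [MonoidAlgebra.supported_eq_span_single]
  unfold groupAlgCopy
  congr 1
  ext x
  constructor
  · rintro ⟨σ, hσ, rfl⟩
    exact ⟨σ, hσ, rfl⟩
  · rintro ⟨σ, hσ, rfl⟩
    exact ⟨σ, hσ, rfl⟩

lemma mem_copy_iff {i : ℕ} {x : A n} :
    x ∈ groupAlgCopy n i ↔ ∀ σ, x σ ≠ 0 → σ ∈ Hi n i := by
  rw [copy_eq_supported, MonoidAlgebra.mem_supported]
  constructor
  · intro h σ hσ
    exact h (Finsupp.mem_support_iff.2 hσ)
  · intro h σ hσ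
    exact h σ (Finsupp.mem_support_iff.1 hσ)

lemma og_mem_copy {i : ℕ} {σ : Equiv.Perm (Fin n)} (h : σ ∈ Hi n i) :
    og σ ∈ groupAlgCopy n i := by
  apply mem_copy_iff.2
  intro τ hτ
  rw [og_apply] at hτ
  by_cases hst : σ = τ
  · exact hst ▸ h
  · simp [hst] at hτ

lemma copy_one {i : ℕ} : (1 : A n) ∈ groupAlgCopy n i := by
  have : (1 : A n) = og 1 := rfl
  rw [this]
  exact og_mem_copy (one_mem _)

lemma copy_mul {i : ℕ} {x y : A n} (hx : x ∈ groupAlgCopy n i)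
    (hy : y ∈ groupAlgCopy n i) : x * y ∈ groupAlgCopy n i := by
  rw [copy_eq_supported, MonoidAlgebra.mem_supported] at *
  refine subset_trans (Finset.coe_subset.2 (MonoidAlgebra.support_coeff_mul_subset x y)) ?_
  intro τ hτ
  simp only [Finset.mem_coe, Finset.mem_mul] at hτ
  obtain ⟨a, ha, b, hb, rfl⟩ := hτ
  exact mul_mem (hx ha) (hy hb)

lemma commute_copy {i : ℕ} {z : A n} (h : ∀ g ∈ Hi n i, Commute (og g) z)
    {y : A n} (hy : y ∈ groupAlgCopy n i) : Commute y z := by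
  unfold groupAlgCopy at hy
  induction hy using Submodule.span_induction with
  | mem x hx =>
      obtain ⟨σ, hσ, rfl⟩ := hx
      exact h σ hσ
  | zero => exact Commute.zero_left z
  | add a b _ _ ha hb => exact ha.add_left hb
  | smul c a _ ha => exact ha.smul_left c

lemma mem_centerCopy_iff {i : ℕ} {x : A n} :
    x ∈ centerCopy n i ↔ x ∈ groupAlgCopy n i ∧ ∀ g ∈ Hi n i, Commute (og g) x := by
  constructor
  · rintro ⟨hx, hc⟩
    refine ⟨hx, fun g hg => ?_⟩
    exact ((hc (og g) (og_mem_copy hg)).symm : og g * x = x * og g)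
  · rintro ⟨hx, hc⟩
    refine ⟨hx, fun y hy => ?_⟩
    exact ((commute_copy hc hy).symm.eq.symm : y * x = x * y).symm

lemma coeff_conj {x : A n} {g : Equiv.Perm (Fin n)} (h : Commute (og g) x)
    (τ : Equiv.Perm (Fin n)) : x (g * τ * g⁻¹) = x τ := by
  have h1 : (og g * x) (g * τ) = (x * og g) (g * τ) := by rw [h.eq]
  rw [og] at h1
  rw [MonoidAlgebra.of_apply] at h1
  rw [MonoidAlgebra.coeff_single_mul_apply, MonoidAlgebra.coeff_mul_single_apply] at h1
  simpa [mul_assoc] using h1.symm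


/-! ### Generation of `Hi n i` by adjacent transpositions -/

def adjSwaps (n i : ℕ) : Set (Equiv.Perm (Fin n)) :=
  {σ | ∃ a b : Fin n, (a : ℕ) + 1 = (b : ℕ) ∧ (b : ℕ) < i ∧ σ = Equiv.swap a b}

lemma swap_mem_Hi {i : ℕ} {a b : Fin n} (ha : (a : ℕ) < i) (hb : (b : ℕ) < i) :
    Equiv.swap a b ∈ Hi n i := by
  intro k hk
  apply Equiv.swap_apply_of_ne_of_ne
  · intro h; subst h; omega
  · intro h; subst h; omega

lemma hi_map_lt {i : ℕ} {g : Equiv.Perm (Fin n)} (hg : g ∈ Hi n i) {p : Fin n}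
    (hp : (p : ℕ) < i) : ((g p : Fin n) : ℕ) < i := by
  by_contra h
  push_neg at h
  have h2 := hg (g p) h
  have := g.injective h2
  rw [this] at h
  omega

lemma swap_mem_closure {i : ℕ} : ∀ m : ℕ, ∀ a b : Fin n, (a : ℕ) < (b : ℕ) →
    (b : ℕ) < i → (b : ℕ) ≤ m → Equiv.swap a b ∈ Subgroup.closure (adjSwaps n i) := by
  intro m
  induction m with
  | zero => intro a b hab hbi hbm; omega
  | succ m ih =>
    intro a b hab hbi hbm
    by_cases h : (a : ℕ) + 1 = (b : ℕ)
    · exact Subgroup.subset_closure ⟨a, b, h, hbi, rfl⟩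
    · have hb1 : 1 ≤ (b : ℕ) := by omega
      set b' : Fin n := ⟨(b : ℕ) - 1, by omega⟩ with hb'
      have hab' : (a : ℕ) < (b' : ℕ) := by simp [hb']; omega
      have h1 : Equiv.swap b' b ∈ Subgroup.closure (adjSwaps n i) :=
        Subgroup.subset_closure ⟨b', b, by simp [hb']; omega, hbi, rfl⟩
      have h2 : Equiv.swap a b' ∈ Subgroup.closure (adjSwaps n i) :=
        ih a b' hab' (by simp [hb']; omega) (by simp [hb']; omega)
      have key : Equiv.swap a b = Equiv.swap b' b * Equiv.swap a b' * (Equiv.swap b' b)⁻¹ := by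
        rw [← Equiv.swap_apply_apply]
        congr 1
        · refine (Equiv.swap_apply_of_ne_of_ne ?_ ?_).symm
          · intro hc; rw [hc] at hab'; omega
          · intro hc; rw [hc] at hab; omega
        · exact (Equiv.swap_apply_left _ _).symm
      rw [key]
      exact mul_mem (mul_mem h1 h2) (inv_mem h1)

lemma Hi_le_closure (i : ℕ) : Hi n i ≤ Subgroup.closure (adjSwaps n i) := by
  intro σ hσ
  generalize hm : σ.support.card = m
  induction m using Nat.strong_induction_on generalizing σ with
  | _ m ih =>
    rcases Finset.eq_empty_or_nonempty σ.support with he | ⟨a, ha⟩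
    · rw [Equiv.Perm.support_eq_empty_iff] at he
      rw [he]; exact one_mem _
    · have hσa : σ a ≠ a := Equiv.Perm.mem_support.1 ha
      have hai : (a : ℕ) < i := by
        by_contra h; push_neg at h; exact hσa (hσ a h)
      have hσai : ((σ a : Fin n) : ℕ) < i := hi_map_lt hσ hai
      have hcard := Equiv.Perm.card_support_swap_mul hσa
      have hswap : Equiv.swap a (σ a) ∈ Subgroup.closure (adjSwaps n i) := by
        rcases lt_trichotomy ((a : ℕ)) ((σ a : Fin n) : ℕ) with h | h | h
        · exact swap_mem_closure _ a (σ a) h hσai le_rfl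
        · exfalso; exact hσa (Fin.ext h.symm)
        · rw [Equiv.swap_comm]
          exact swap_mem_closure _ (σ a) a h hai le_rfl
      have hmem : Equiv.swap a (σ a) * σ ∈ Hi n i :=
        mul_mem (swap_mem_Hi hai hσai) hσ
      have hrec : Equiv.swap a (σ a) * σ ∈ Subgroup.closure (adjSwaps n i) :=
        ih _ (by omega) hmem rfl
      have : σ = Equiv.swap a (σ a) * (Equiv.swap a (σ a) * σ) := by
        rw [← mul_assoc, Equiv.swap_mul_self, one_mul]
      rw [this]
      exact mul_mem hswap hrec

/-! ### Hecke-type relations -/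

section HeckeAbstract

variable {R : Type*} [Ring R] {s x y : R}

lemma hecke_sx (h1 : s * s = 1) (h2 : s * x * s = y - s) : s * x = y * s - 1 := by
  have := congrArg (· * s) h2
  simp only [sub_mul, mul_assoc, h1, mul_one] at this
  simpa using this

lemma hecke_sy (h1 : s * s = 1) (h2 : s * x * s = y - s) : s * y = x * s + 1 := by
  have hy : y = s * x * s + s := by rw [h2, sub_add_cancel]
  rw [hy, mul_add, ← mul_assoc, ← mul_assoc, h1, one_mul]

lemma hecke_pow_x (h1 : s * s = 1) (h2 : s * x * s = y - s) (hxy : Commute x y) (p : ℕ) :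
    s * x ^ p = y ^ p * s - ∑ t ∈ Finset.range p, y ^ t * x ^ (p - 1 - t) := by
  induction p with
  | zero => simp
  | succ p ih =>
    have : s * x ^ (p + 1) = (s * x ^ p) * x := by
      rw [mul_assoc, ← pow_succ]
    rw [this, ih, sub_mul, Finset.sum_mul]
    have h3 : y ^ p * s * x = y ^ (p + 1) * s - y ^ p := by
      rw [mul_assoc, hecke_sx h1 h2, mul_sub, ← mul_assoc, ← pow_succ, mul_one]
    rw [h3]
    have h4 : ∀ t ∈ Finset.range p, y ^ t * x ^ (p - 1 - t) * x = y ^ t * x ^ (p - t) := by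
      intro t ht
      rw [Finset.mem_range] at ht
      rw [mul_assoc, ← pow_succ]
      congr 2
      omega
    rw [Finset.sum_congr rfl h4, Finset.sum_range_succ]
    simp only [Nat.add_sub_cancel, Nat.sub_self, pow_zero, mul_one]
    abel

lemma hecke_pow_y (h1 : s * s = 1) (h2 : s * x * s = y - s) (hxy : Commute x y) (p : ℕ) :
    s * y ^ p = x ^ p * s + ∑ t ∈ Finset.range p, x ^ t * y ^ (p - 1 - t) := by
  induction p with
  | zero => simp
  | succ p ih =>
    have : s * y ^ (p + 1) = (s * y ^ p) * y := by
      rw [mul_assoc, ← pow_succ]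
    rw [this, ih, add_mul, Finset.sum_mul]
    have h3 : x ^ p * s * y = x ^ (p + 1) * s + x ^ p := by
      rw [mul_assoc, hecke_sy h1 h2, mul_add, ← mul_assoc, ← pow_succ, mul_one]
    rw [h3]
    have h4 : ∀ t ∈ Finset.range p, x ^ t * y ^ (p - 1 - t) * y = x ^ t * y ^ (p - t) := by
      intro t ht
      rw [Finset.mem_range] at ht
      rw [mul_assoc, ← pow_succ]
      congr 2
      omega
    rw [Finset.sum_congr rfl h4, Finset.sum_range_succ]
    simp only [Nat.add_sub_cancel, Nat.sub_self, pow_zero, mul_one]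
    abel

lemma hecke_comm_pow (h1 : s * s = 1) (h2 : s * x * s = y - s) (p : ℕ)
    (h : Commute x y ∨ p = 1) :
    s * (x ^ p + y ^ p) = (x ^ p + y ^ p) * s := by
  rcases h with hxy | hp
  · rw [mul_add, hecke_pow_x h1 h2 hxy p, hecke_pow_y h1 h2 hxy p, add_mul]
    have hs : ∑ t ∈ Finset.range p, x ^ t * y ^ (p - 1 - t)
        = ∑ t ∈ Finset.range p, y ^ t * x ^ (p - 1 - t) := by
      have step1 : ∀ t ∈ Finset.range p,
          x ^ t * y ^ (p - 1 - t) = y ^ (p - 1 - t) * x ^ (p - 1 - (p - 1 - t)) := by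
        intro t ht
        rw [Finset.mem_range] at ht
        rw [show p - 1 - (p - 1 - t) = t by omega]
        exact (hxy.pow_pow t (p - 1 - t)).eq
      rw [Finset.sum_congr rfl step1]
      exact Finset.sum_range_reflect (fun t => y ^ t * x ^ (p - 1 - t)) p
    rw [hs]
    abel
  · subst hp
    simp only [pow_one]
    rw [mul_add, hecke_sx h1 h2, hecke_sy h1 h2, add_mul]
    abel

end HeckeAbstract

/-! ### Concrete relations for Jucys–Murphy elements -/

lemma og_one : og (1 : Equiv.Perm (Fin n)) = 1 := rfl

lemma jm_def (i : Fin n) : jm n i = ∑ k ∈ Finset.univ.filter (fun k => k < i),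
    og (Equiv.swap k i) := rfl

lemma og_swap_sq (a b : Fin n) : og (Equiv.swap a b) * og (Equiv.swap a b) = 1 := by
  rw [← og_mul, Equiv.swap_mul_self, og_one]

lemma commute_og_inv {g : Equiv.Perm (Fin n)} {z : A n} (h : Commute (og g) z) :
    Commute (og g⁻¹) z := by
  have h1 : og g⁻¹ * og g = 1 := by rw [← og_mul, inv_mul_cancel, og_one]
  have h2 : og g * og g⁻¹ = 1 := by rw [← og_mul, mul_inv_cancel, og_one]
  let u : (A n)ˣ := ⟨og g, og g⁻¹, h2, h1⟩
  have hu : Commute (↑u : A n) z := h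
  exact hu.units_inv_left

lemma hR2 {a b : Fin n} (hab : (a : ℕ) + 1 = (b : ℕ)) :
    og (Equiv.swap a b) * jm n a * og (Equiv.swap a b) = jm n b - og (Equiv.swap a b) := by
  have key : ∀ k : Fin n, k < a →
      Equiv.swap a b * Equiv.swap k a * Equiv.swap a b = Equiv.swap k b := by
    intro k hk
    have h1 : Equiv.swap ((Equiv.swap a b) k) ((Equiv.swap a b) a)
        = Equiv.swap a b * Equiv.swap k a * (Equiv.swap a b)⁻¹ :=
      Equiv.swap_apply_apply _ _ _
    rw [Equiv.swap_inv] at h1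
    rw [← h1, Equiv.swap_apply_left]
    congr 1
    apply Equiv.swap_apply_of_ne_of_ne
    · exact hk.ne
    · intro hc
      have := Fin.lt_def.1 hk
      rw [hc] at this
      omega
  have hfb : Finset.univ.filter (fun k : Fin n => k < b) =
      insert a (Finset.univ.filter (fun k : Fin n => k < a)) := by
    ext k
    simp only [Finset.mem_filter, Finset.mem_insert, Finset.mem_univ, true_and,
      Fin.lt_def, Fin.ext_iff]
    omega
  calc og (Equiv.swap a b) * jm n a * og (Equiv.swap a b)
      = ∑ k ∈ Finset.univ.filter (fun k : Fin n => k < a),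
          og (Equiv.swap a b * Equiv.swap k a * Equiv.swap a b) := by
        rw [jm_def, Finset.mul_sum, Finset.sum_mul]
        refine Finset.sum_congr rfl fun k _ => ?_
        rw [og_mul, og_mul]
    _ = ∑ k ∈ Finset.univ.filter (fun k : Fin n => k < a), og (Equiv.swap k b) := by
        refine Finset.sum_congr rfl fun k hk => ?_
        rw [key k (Finset.mem_filter.1 hk).2]
    _ = jm n b - og (Equiv.swap a b) := by
        rw [jm_def, hfb, Finset.sum_insert (by simp)]
        rw [add_sub_cancel_left]

lemma hR3 {a b m : Fin n} (hab : (a : ℕ) + 1 = (b : ℕ)) (hma : m ≠ a) (hmb : m ≠ b) :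
    Commute (og (Equiv.swap a b)) (jm n m) := by
  have hm : (m : ℕ) < (a : ℕ) ∨ (b : ℕ) < (m : ℕ) := by
    have h1 : (m : ℕ) ≠ (a : ℕ) := fun h => hma (Fin.ext h)
    have h2 : (m : ℕ) ≠ (b : ℕ) := fun h => hmb (Fin.ext h)
    omega
  have hsm : (Equiv.swap a b) m = m := by
    apply Equiv.swap_apply_of_ne_of_ne hma hmb
  have hsk : ∀ k : Fin n, k < m → (Equiv.swap a b) k < m := by
    intro k hk
    rcases eq_or_ne k a with rfl | hka
    · rw [Equiv.swap_apply_left, Fin.lt_def]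
      rw [Fin.lt_def] at hk
      omega
    rcases eq_or_ne k b with rfl | hkb
    · rw [Equiv.swap_apply_right, Fin.lt_def]
      rw [Fin.lt_def] at hk
      omega
    · rw [Equiv.swap_apply_of_ne_of_ne hka hkb]
      exact hk
  have hconj : og (Equiv.swap a b) * jm n m * og (Equiv.swap a b) = jm n m := by
    calc og (Equiv.swap a b) * jm n m * og (Equiv.swap a b)
        = ∑ k ∈ Finset.univ.filter (fun k : Fin n => k < m),
            og (Equiv.swap a b * Equiv.swap k m * Equiv.swap a b) := by
          rw [jm_def, Finset.mul_sum, Finset.sum_mul]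
          refine Finset.sum_congr rfl fun k _ => ?_
          rw [og_mul, og_mul]
      _ = ∑ k ∈ Finset.univ.filter (fun k : Fin n => k < m),
            og (Equiv.swap ((Equiv.swap a b) k) m) := by
          refine Finset.sum_congr rfl fun k _ => ?_
          congr 1
          have h1 : Equiv.swap ((Equiv.swap a b) k) ((Equiv.swap a b) m)
              = Equiv.swap a b * Equiv.swap k m * (Equiv.swap a b)⁻¹ :=
            Equiv.swap_apply_apply _ _ _
          rw [Equiv.swap_inv, hsm] at h1
          rw [← h1]
      _ = jm n m := by
          rw [jm_def]
          refine Finset.sum_nbij' (fun k => (Equiv.swap a b) k) (fun k => (Equiv.swap a b) k)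
            ?_ ?_ ?_ ?_ ?_
          · intro k hk
            simp only [Finset.mem_filter, Finset.mem_univ, true_and] at *
            exact hsk k hk
          · intro k hk
            simp only [Finset.mem_filter, Finset.mem_univ, true_and] at *
            exact hsk k hk
          · intro k _; simp
          · intro k _; simp
          · intro k _; rfl
  have sq := og_swap_sq a b
  show og (Equiv.swap a b) * jm n m = jm n m * og (Equiv.swap a b)
  calc og (Equiv.swap a b) * jm n m
      = og (Equiv.swap a b) * jm n m * (og (Equiv.swap a b) * og (Equiv.swap a b)) := by
        rw [sq, mul_one]
    _ = (og (Equiv.swap a b) * jm n m * og (Equiv.swap a b)) * og (Equiv.swap a b) := by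
        rw [mul_assoc, mul_assoc, mul_assoc]
    _ = jm n m * og (Equiv.swap a b) := by rw [hconj]

/-- Power sums of Jucys–Murphy elements. -/
def Pp (n i e : ℕ) : A n :=
  ∑ k ∈ Finset.univ.filter (fun k : Fin n => (k : ℕ) < i), (jm n k) ^ e

lemma comm_pair {a b : Fin n} (hab : (a : ℕ) + 1 = (b : ℕ)) (e : ℕ)
    (h : Commute (jm n a) (jm n b) ∨ e = 1) :
    Commute (og (Equiv.swap a b)) (jm n a ^ e + jm n b ^ e) :=
  hecke_comm_pow (og_swap_sq a b) (hR2 hab) e h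

lemma Pp_commute' (i e : ℕ)
    (h : (∀ j k : Fin n, Commute (jm n j) (jm n k)) ∨ e = 1) :
    ∀ g ∈ Hi n i, Commute (og g) (Pp n i e) := by
  intro g hg
  have hg' := Hi_le_closure i hg
  clear hg
  induction hg' using Subgroup.closure_induction with
  | mem σ hσ =>
    obtain ⟨a, b, hab, hbi, rfl⟩ := hσ
    have hai : (a : ℕ) < i := by omega
    have hne : a ≠ b := by intro hc; rw [hc] at hab; omega
    have ha : a ∈ Finset.univ.filter (fun k : Fin n => (k : ℕ) < i) := by
      simp [hai]
    have hb : b ∈ (Finset.univ.filter (fun k : Fin n => (k : ℕ) < i)).erase a := by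
      simp [hbi, hne.symm]
    have hsplit : Pp n i e = (jm n a ^ e + jm n b ^ e) +
        ∑ k ∈ ((Finset.univ.filter (fun k : Fin n => (k : ℕ) < i)).erase a).erase b,
          jm n k ^ e := by
      unfold Pp
      rw [← Finset.add_sum_erase _ _ ha, ← Finset.add_sum_erase _ _ hb, add_assoc]
    rw [hsplit]
    refine Commute.add_right (comm_pair hab e ?_) (Commute.sum_right _ _ _ fun k hk => ?_)
    · exact h.imp_left fun H => H a b
    · have hk1 : k ≠ b := (Finset.mem_erase.1 hk).1
      have hk2 : k ≠ a := (Finset.mem_erase.1 (Finset.mem_erase.1 hk).2).1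
      exact (hR3 hab hk2 hk1).pow_right e
  | one => rw [og_one]; exact Commute.one_left _
  | mul σ τ _ _ hσ hτ => rw [og_mul]; exact hσ.mul_left hτ
  | inv σ _ hσ => exact commute_og_inv hσ

lemma jm_mem_copy {m : ℕ} {k : Fin n} (h : (k : ℕ) < m) : jm n k ∈ groupAlgCopy n m := by
  rw [jm_def]
  apply Submodule.sum_mem
  intro j hj
  have hj' : j < k := (Finset.mem_filter.1 hj).2
  exact og_mem_copy (swap_mem_Hi (by have := Fin.lt_def.1 hj'; omega) h)

lemma copy_pow {i : ℕ} {x : A n} (hx : x ∈ groupAlgCopy n i) (e : ℕ) :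
    x ^ e ∈ groupAlgCopy n i := by
  induction e with
  | zero => simpa using copy_one
  | succ e ih => rw [pow_succ]; exact copy_mul ih hx

lemma Pp_mem_copy {i e : ℕ} : Pp n i e ∈ groupAlgCopy n i := by
  apply Submodule.sum_mem
  intro k hk
  exact copy_pow (jm_mem_copy (Finset.mem_filter.1 hk).2) e

lemma Ttr_succ (k : Fin n) : Pp n ((k : ℕ) + 1) 1 = jm n k + Pp n (k : ℕ) 1 := by
  unfold Pp
  have hf : Finset.univ.filter (fun j : Fin n => (j : ℕ) < (k : ℕ) + 1) =
      insert k (Finset.univ.filter (fun j : Fin n => (j : ℕ) < (k : ℕ))) := by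
    ext j
    simp only [Finset.mem_filter, Finset.mem_insert, Finset.mem_univ, true_and, Fin.ext_iff]
    omega
  rw [hf, Finset.sum_insert (by simp), pow_one]

lemma jm_eq_sub (k : Fin n) : jm n k = Pp n ((k : ℕ) + 1) 1 - Pp n (k : ℕ) 1 := by
  rw [Ttr_succ, add_sub_cancel_right]

lemma jm_commute (j k : Fin n) : Commute (jm n j) (jm n k) := by
  have aux : ∀ j k : Fin n, (j : ℕ) < (k : ℕ) → Commute (jm n j) (jm n k) := by
    intro j k hjk
    have c1 : Commute (jm n j) (Pp n (k : ℕ) 1) :=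
      commute_copy (Pp_commute' _ 1 (Or.inr rfl)) (jm_mem_copy hjk)
    have c2 : Commute (jm n j) (Pp n ((k : ℕ) + 1) 1) :=
      commute_copy (Pp_commute' _ 1 (Or.inr rfl)) (jm_mem_copy (by omega))
    rw [jm_eq_sub k]
    exact c2.sub_right c1
  rcases lt_trichotomy ((j : ℕ)) ((k : ℕ)) with h | h | h
  · exact aux j k h
  · rw [Fin.ext h]
  · exact (aux k j h).symm

lemma Pp_commute (i e : ℕ) : ∀ g ∈ Hi n i, Commute (og g) (Pp n i e) :=
  Pp_commute' i e (Or.inl jm_commute)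

lemma Pp_pairwise_commute (i e f : ℕ) : Commute (Pp n i e) (Pp n i f) :=
  commute_copy (Pp_commute i f) Pp_mem_copy


/-! ### Coefficientwise nonnegativity -/

def SNN : Set ℂ := {z | ∃ r : ℝ, 0 ≤ r ∧ z = r}

lemma SNN_zero : (0 : ℂ) ∈ SNN := ⟨0, le_refl _, by simp⟩
lemma SNN_one : (1 : ℂ) ∈ SNN := ⟨1, zero_le_one, by simp⟩

lemma SNN_add {z w : ℂ} (hz : z ∈ SNN) (hw : w ∈ SNN) : z + w ∈ SNN := by
  obtain ⟨r, hr, rfl⟩ := hz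
  obtain ⟨t, ht, rfl⟩ := hw
  exact ⟨r + t, by positivity, by push_cast; ring⟩

lemma SNN_mul {z w : ℂ} (hz : z ∈ SNN) (hw : w ∈ SNN) : z * w ∈ SNN := by
  obtain ⟨r, hr, rfl⟩ := hz
  obtain ⟨t, ht, rfl⟩ := hw
  exact ⟨r * t, by positivity, by push_cast; ring⟩

lemma SNN_sum {ι : Type*} {s : Finset ι} {f : ι → ℂ} (h : ∀ i ∈ s, f i ∈ SNN) :
    (∑ i ∈ s, f i) ∈ SNN := by
  classical
  induction s using Finset.induction_on with
  | empty => simpa using SNN_zero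
  | insert _ _ hx ih =>
    rw [Finset.sum_insert hx]
    exact SNN_add (h _ (Finset.mem_insert_self _ _))
      (ih fun i hi => h i (Finset.mem_insert_of_mem hi))

def NN (x : A n) : Prop := ∀ τ, x τ ∈ SNN

lemma NN_zero : NN (0 : A n) := fun τ => by simpa using SNN_zero

lemma NN_og (σ : Equiv.Perm (Fin n)) : NN (og σ) := by
  intro τ
  rw [og_apply]
  by_cases h : σ = τ <;> simp [h, SNN_one, SNN_zero]

lemma NN_one : NN (1 : A n) := NN_og 1

lemma NN_add {x y : A n} (hx : NN x) (hy : NN y) : NN (x + y) := by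
  intro τ
  have : (x + y) τ = x τ + y τ := rfl
  rw [this]
  exact SNN_add (hx τ) (hy τ)

lemma NN_sum {ι : Type*} {s : Finset ι} {f : ι → A n} (h : ∀ i ∈ s, NN (f i)) :
    NN (∑ i ∈ s, f i) := by
  classical
  induction s using Finset.induction_on with
  | empty => simpa using NN_zero
  | insert _ _ hx ih =>
    rw [Finset.sum_insert hx]
    exact NN_add (h _ (Finset.mem_insert_self _ _))
      (ih fun i hi => h i (Finset.mem_insert_of_mem hi))

lemma NN_mul {x y : A n} (hx : NN x) (hy : NN y) : NN (x * y) := by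
  intro τ
  classical
  rw [MonoidAlgebra.mul_apply]
  apply SNN_sum
  intro a _
  apply SNN_sum
  intro b _
  by_cases h : a * b = τ
  · simp only [h, if_pos rfl]
    exact SNN_mul (hx a) (hy b)
  · simp only [if_neg h]
    exact SNN_zero

lemma NN_jm (k : Fin n) : NN (jm n k) := by
  rw [jm_def]
  exact NN_sum fun j _ => NN_og _

lemma NN_pow {x : A n} (hx : NN x) (e : ℕ) : NN (x ^ e) := by
  induction e with
  | zero => simpa using NN_one
  | succ e ih => rw [pow_succ]; exact NN_mul ih hx

lemma NN_Pp (i e : ℕ) : NN (Pp n i e) :=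
  NN_sum fun k _ => NN_pow (NN_jm k) e

/-- Coefficientwise domination. -/
def dle (x y : A n) : Prop := NN (y - x)

lemma dle_mul {x X y Y : A n} (hx : NN x) (hy : NN y) (hX : dle x X) (hY : dle y Y) :
    dle (x * y) (X * Y) := by
  have hNX : NN X := by
    rw [(sub_add_cancel X x).symm]; exact NN_add hX hx
  have key : X * Y - x * y = X * (Y - y) + (X - x) * y := by
    rw [mul_sub, sub_mul]; abel
  unfold dle
  rw [key]
  exact NN_add (NN_mul hNX hY) (NN_mul hX hy)

lemma dle_prod : ∀ {L L' : List (A n)},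
    List.Forall₂ (fun u v => NN u ∧ dle u v) L L' → NN L.prod ∧ dle L.prod L'.prod := by
  intro L L' h
  induction h with
  | nil =>
    refine ⟨NN_one, ?_⟩
    unfold dle
    simpa using NN_zero
  | @cons u v L L' huv hLL ih =>
    rw [List.prod_cons, List.prod_cons]
    exact ⟨NN_mul huv.1 ih.1, dle_mul huv.1 ih.1 huv.2 ih.2⟩

/-! ### Block presentations of permutations -/

def blockPerm (b : List (Fin n) × Fin n) : Equiv.Perm (Fin n) :=
  (b.1.map (fun a => Equiv.swap a b.2)).prod

def valB (B : List (List (Fin n) × Fin n)) : Equiv.Perm (Fin n) :=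
  (B.map blockPerm).prod

def ptsB (B : List (List (Fin n) × Fin n)) : List (Fin n) :=
  (B.map (fun b => b.2 :: b.1)).flatten

def PresB (n i : ℕ) (B : List (List (Fin n) × Fin n)) : Prop :=
  ∀ b ∈ B, (∀ a ∈ b.1, a < b.2) ∧ (b.2 : ℕ) < i

lemma listprod_fixed {l : List (Equiv.Perm (Fin n))} {x : Fin n}
    (h : ∀ σ ∈ l, σ x = x) : l.prod x = x := by
  induction l with
  | nil => rfl
  | cons σ l ih =>
    rw [List.prod_cons, Equiv.Perm.mul_apply,
      ih fun τ hτ => h τ (List.mem_cons_of_mem _ hτ), h σ (List.mem_cons_self)]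

lemma blockPerm_fixed {b : List (Fin n) × Fin n} {x : Fin n}
    (hx : x ≠ b.2) (hx' : x ∉ b.1) : blockPerm b x = x := by
  apply listprod_fixed
  intro σ hσ
  rw [List.mem_map] at hσ
  obtain ⟨a, ha, rfl⟩ := hσ
  exact Equiv.swap_apply_of_ne_of_ne (fun hc => hx' (hc ▸ ha)) hx

lemma valB_fixed {B : List (List (Fin n) × Fin n)} {x : Fin n}
    (hx : x ∉ ptsB B) : valB B x = x := by
  apply listprod_fixed
  intro σ hσ
  rw [List.mem_map] at hσ
  obtain ⟨b, hb, rfl⟩ := hσ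
  apply blockPerm_fixed
  · intro hc
    exact hx (by
      subst hc
      exact List.mem_flatten.2 ⟨_, List.mem_map.2 ⟨b, hb, rfl⟩, List.mem_cons_self⟩)
  · intro hc
    exact hx (List.mem_flatten.2 ⟨_, List.mem_map.2 ⟨b, hb, rfl⟩, List.mem_cons_of_mem _ hc⟩)

lemma valB_support {B : List (List (Fin n) × Fin n)} :
    (valB B).support ⊆ (ptsB B).toFinset := by
  intro x hx
  rw [List.mem_toFinset]
  by_contra h
  exact (Equiv.Perm.mem_support.1 hx) (valB_fixed h)

lemma valB_mem_Hi {i : ℕ} {B : List (List (Fin n) × Fin n)} (h : PresB n i B) :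
    valB B ∈ Hi n i := by
  intro k hk
  apply valB_fixed
  intro hc
  rw [ptsB, List.mem_flatten] at hc
  obtain ⟨l, hl, hkl⟩ := hc
  rw [List.mem_map] at hl
  obtain ⟨b, hb, rfl⟩ := hl
  obtain ⟨hba, hbi⟩ := h b hb
  rcases List.mem_cons.1 hkl with rfl | hmem
  · omega
  · have := hba k hmem
    rw [Fin.lt_def] at this
    omega

lemma length_ptsB (B : List (List (Fin n) × Fin n)) :
    (ptsB B).length = (B.map (fun b => b.1.length + 1)).sum := by
  simp only [ptsB, List.length_flatten, List.map_map]
  congr 1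

lemma conj_blockPerm (g : Equiv.Perm (Fin n)) (b : List (Fin n) × Fin n) :
    g * blockPerm b * g⁻¹ = blockPerm (b.1.map g, g b.2) := by
  unfold blockPerm
  have h1 : g * (List.map (fun a => Equiv.swap a b.2) b.1).prod * g⁻¹
      = (MulAut.conj g).toMonoidHom (List.map (fun a => Equiv.swap a b.2) b.1).prod := rfl
  rw [h1, map_list_prod, List.map_map, List.map_map]
  congr 1
  apply List.map_congr_left
  intro a _
  show (MulAut.conj g) (Equiv.swap a b.2) = Equiv.swap (g a) (g b.2)
  rw [MulAut.conj_apply, ← Equiv.swap_apply_apply]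

lemma conj_valB (g : Equiv.Perm (Fin n)) (B : List (List (Fin n) × Fin n)) :
    g * valB B * g⁻¹ = valB (B.map (fun b => (b.1.map g, g b.2))) := by
  unfold valB
  have h1 : g * (B.map blockPerm).prod * g⁻¹
      = (MulAut.conj g).toMonoidHom (B.map blockPerm).prod := rfl
  rw [h1, map_list_prod, List.map_map, List.map_map]
  congr 1
  apply List.map_congr_left
  intro b _
  show (MulAut.conj g) (blockPerm b) = blockPerm (b.1.map g, g b.2)
  rw [MulAut.conj_apply, conj_blockPerm]

/-! ### Support expansions -/

lemma exists_decomp : ∀ {L : List (A n)} {τ : Equiv.Perm (Fin n)},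
    τ ∈ (L.prod).coeff.support →
    ∃ picks : List (Equiv.Perm (Fin n)),
      List.Forall₂ (fun z σ => σ ∈ z.coeff.support) L picks ∧ τ = picks.prod := by
  intro L
  induction L with
  | nil =>
    intro τ hτ
    refine ⟨[], List.Forall₂.nil, ?_⟩
    rw [List.prod_nil, MonoidAlgebra.one_def] at hτ
    have := Finsupp.support_single_subset hτ
    rw [Finset.mem_singleton] at this
    rw [this, List.prod_nil]
  | cons z L ih =>
    intro τ hτ
    rw [List.prod_cons] at hτ
    have hm := MonoidAlgebra.support_coeff_mul_subset z L.prod hτ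
    rw [Finset.mem_mul] at hm
    obtain ⟨a, ha, c, hc, rfl⟩ := hm
    obtain ⟨picks, hp, rfl⟩ := ih hc
    exact ⟨a :: picks, List.Forall₂.cons ha hp, by rw [List.prod_cons]⟩

lemma supp_jm {k : Fin n} {σ : Equiv.Perm (Fin n)} (h : σ ∈ (jm n k).coeff.support) :
    ∃ a : Fin n, a < k ∧ σ = Equiv.swap a k := by
  rw [jm_def, MonoidAlgebra.coeff_sum] at h
  have := Finsupp.support_finset_sum h
  rw [Finset.mem_biUnion] at this
  obtain ⟨j, hj, hσ⟩ := this
  have hs := Finsupp.support_single_subset hσ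
  rw [Finset.mem_singleton] at hs
  exact ⟨j, (Finset.mem_filter.1 hj).2, hs⟩

lemma picks_decomp {k : Fin n} : ∀ picks : List (Equiv.Perm (Fin n)),
    (∀ σ ∈ picks, σ ∈ (jm n k).coeff.support) →
    ∃ as : List (Fin n), as.length = picks.length ∧ (∀ a ∈ as, a < k) ∧
      picks.prod = blockPerm (as, k) := by
  intro picks
  induction picks with
  | nil => exact fun _ => ⟨[], rfl, by simp, rfl⟩
  | cons σ picks ih =>
    intro hmem
    obtain ⟨a, hak, rfl⟩ := supp_jm (hmem σ (List.mem_cons_self))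
    obtain ⟨as, hl, hlt, hval⟩ := ih (fun τ hτ => hmem τ (List.mem_cons_of_mem _ hτ))
    refine ⟨a :: as, by simp [hl], ?_, ?_⟩
    · intro x hx
      rcases List.mem_cons.1 hx with rfl | hx
      · exact hak
      · exact hlt x hx
    · show (Equiv.swap a k :: picks).prod = blockPerm (a :: as, k)
      unfold blockPerm at hval ⊢
      simp only [List.map_cons, List.prod_cons]
      rw [← hval]

lemma supp_jm_pow {k : Fin n} {e : ℕ} {σ : Equiv.Perm (Fin n)}
    (h : σ ∈ ((jm n k) ^ e).coeff.support) :
    ∃ as : List (Fin n), as.length = e ∧ (∀ a ∈ as, a < k) ∧ σ = blockPerm (as, k) := by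
  have hrep : (jm n k) ^ e = (List.replicate e (jm n k)).prod := (List.prod_replicate e _).symm
  rw [hrep] at h
  obtain ⟨picks, hp, rfl⟩ := exists_decomp h
  have hlen : picks.length = e := by
    have := hp.length_eq
    rw [List.length_replicate] at this
    omega
  have hmem : ∀ σ ∈ picks, σ ∈ (jm n k).coeff.support := by
    intro σ hσ
    obtain ⟨t, ht⟩ := List.mem_iff_get.1 hσ
    have h2 := List.forall₂_iff_get.1 hp
    have h3 := h2.2 t.1 (by omega) t.2
    rw [List.get_eq_getElem, List.getElem_replicate] at h3
    rw [← ht]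
    convert h3
  obtain ⟨as, hl, hlt, hval⟩ := picks_decomp picks hmem
  exact ⟨as, by omega, hlt, hval⟩

lemma supp_Pp {i e : ℕ} {σ : Equiv.Perm (Fin n)} (h : σ ∈ (Pp n i e).coeff.support) :
    ∃ b : List (Fin n) × Fin n, b.1.length = e ∧ (∀ a ∈ b.1, a < b.2) ∧
      ((b.2 : ℕ) < i) ∧ σ = blockPerm b := by
  unfold Pp at h
  rw [MonoidAlgebra.coeff_sum] at h
  have := Finsupp.support_finset_sum h
  rw [Finset.mem_biUnion] at this
  obtain ⟨k, hk, hσ⟩ := this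
  obtain ⟨as, hl, hlt, rfl⟩ := supp_jm_pow hσ
  exact ⟨(as, k), hl, hlt, (Finset.mem_filter.1 hk).2, rfl⟩


/-! ### Decomposing a cycle into swaps anchored at a fixed point -/

lemma blockPerm_append (as : List (Fin n)) (b k : Fin n) :
    blockPerm (as ++ [b], k) = blockPerm (as, k) * Equiv.swap b k := by
  unfold blockPerm
  rw [List.map_append, List.prod_append]
  simp

lemma cycle_decomp : ∀ (m : ℕ) (c : Equiv.Perm (Fin n)), c.IsCycle → c.support.card ≤ m →
    ∀ k, k ∈ c.support →
    ∃ as : List (Fin n), as.Nodup ∧ (∀ a ∈ as, a ∈ c.support ∧ a ≠ k) ∧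
      as.length + 1 = c.support.card ∧ c = blockPerm (as, k) := by
  intro m
  induction m with
  | zero =>
    intro c hc hcard k hk
    have := hc.two_le_card_support
    omega
  | succ m ih =>
    intro c hc hcard k hk
    have h2 := hc.two_le_card_support
    by_cases hsmall : c.support.card = 2
    · obtain ⟨x, y, hxy, rfl⟩ := Equiv.Perm.card_support_eq_two.1 hsmall
      rw [Equiv.Perm.support_swap hxy, Finset.mem_insert, Finset.mem_singleton] at hk
      rcases hk with rfl | rfl
      · refine ⟨[y], List.nodup_singleton y, ?_, by simp [hsmall], ?_⟩
        · intro a ha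
          rw [List.mem_singleton] at ha
          subst ha
          constructor
          · rw [Equiv.Perm.support_swap hxy]; simp
          · exact fun h => hxy h.symm
        · show Equiv.swap k y = blockPerm ([y], k)
          unfold blockPerm
          simp [Equiv.swap_comm]
      · refine ⟨[x], List.nodup_singleton x, ?_, by simp [hsmall], ?_⟩
        · intro a ha
          rw [List.mem_singleton] at ha
          subst ha
          constructor
          · rw [Equiv.Perm.support_swap hxy]; simp
          · exact hxy
        · show Equiv.swap x k = blockPerm ([x], k)
          unfold blockPerm
          simp
    · have h3 : 3 ≤ c.support.card := by omega
      have hck : c k ≠ k := Equiv.Perm.mem_support.1 hk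
      have hbk : c k ≠ k := hck
      have hbsupp : c k ∈ c.support := Equiv.Perm.apply_mem_support.2 hk
      have hc2 : c (c k) ≠ k := by
        intro hcontra
        have hpow : ∀ j : ℕ, (c ^ j) k = k ∨ (c ^ j) k = c k := by
          intro j
          induction j with
          | zero => left; rfl
          | succ j ihj =>
            rw [pow_succ', Equiv.Perm.mul_apply]
            rcases ihj with h | h
            · right; rw [h]
            · left; rw [h, hcontra]
        have hsub : c.support ⊆ {k, c k} := by
          intro z hz
          obtain ⟨j, hj⟩ := hc.exists_pow_eq hck (Equiv.Perm.mem_support.1 hz)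
          rcases hpow j with h | h <;> rw [hj] at h
          · rw [h]; simp
          · rw [h]; simp
        have hcard2 := Finset.card_le_card hsub
        have : ({k, c k} : Finset (Fin n)).card ≤ 2 := Finset.card_insert_le _ _ |>.trans (by simp)
        omega
      set d := c * Equiv.swap (c k) k with hd
      have hdk : d k = c (c k) := by
        rw [hd, Equiv.Perm.mul_apply, Equiv.swap_apply_right]
      have hdb : d (c k) = c k := by
        rw [hd, Equiv.Perm.mul_apply, Equiv.swap_apply_left]
      have hdother : ∀ x, x ≠ k → x ≠ c k → d x = c x := by
        intro x h1 h2
        rw [hd, Equiv.Perm.mul_apply, Equiv.swap_apply_of_ne_of_ne h2 h1]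
      have hdcycle : d.IsCycle := by
        have hinv : d⁻¹ = Equiv.swap (c k) k * c⁻¹ := by
          rw [hd, mul_inv_rev, Equiv.swap_inv]
        have hx1 : c⁻¹ (c k) ≠ c k := by
          rw [Equiv.Perm.inv_apply_self]
          exact fun h => hck h.symm
        have hx2 : c⁻¹ (c⁻¹ (c k)) ≠ c k := by
          rw [Equiv.Perm.inv_apply_self]
          intro h
          apply hc2
          have := congrArg c h
          rw [Equiv.Perm.apply_inv_self] at this
          rw [← this]
        have hcyc2 := (hc.inv).swap_mul hx1 hx2
        rw [Equiv.Perm.inv_apply_self] at hcyc2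
        rw [← hinv] at hcyc2
        simpa using hcyc2.inv
      have hdsupp : d.support = c.support.erase (c k) := by
        ext x
        rcases eq_or_ne x (c k) with rfl | hx1
        · simp [Equiv.Perm.mem_support, hdb]
        rcases eq_or_ne x k with rfl | hx2
        · simp only [Equiv.Perm.mem_support, hdk, Finset.mem_erase]
          constructor
          · intro _; exact ⟨hx1, hck⟩
          · intro _; exact hc2
        · simp only [Equiv.Perm.mem_support, hdother x hx2 hx1, Finset.mem_erase]
          constructor
          · intro h; exact ⟨hx1, h⟩
          · intro h; exact h.2
      have hdcard : d.support.card = c.support.card - 1 := by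
        rw [hdsupp, Finset.card_erase_of_mem hbsupp]
      have hkd : k ∈ d.support := by
        rw [hdsupp, Finset.mem_erase]
        exact ⟨fun h => hck h.symm, hk⟩
      obtain ⟨as, hnd, hmem, hlen, hval⟩ := ih d hdcycle (by omega) k hkd
      have hbnotin : c k ∉ as := by
        intro hcon
        have := (hmem _ hcon).1
        rw [hdsupp, Finset.mem_erase] at this
        exact this.1 rfl
      refine ⟨as ++ [c k], ?_, ?_, ?_, ?_⟩
      · rw [List.nodup_append]
        exact ⟨hnd, List.nodup_singleton _, by
          intro a ha b hb
          rw [List.mem_singleton] at hb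
          subst hb
          exact fun h => hbnotin (h ▸ ha)⟩
      · intro a ha
        rcases List.mem_append.1 ha with ha | ha
        · obtain ⟨h1, h2⟩ := hmem a ha
          rw [hdsupp] at h1
          exact ⟨Finset.mem_of_mem_erase h1, h2⟩
        · rw [List.mem_singleton] at ha
          subst ha
          exact ⟨hbsupp, hbk⟩
      · rw [List.length_append, List.length_singleton]
        omega
      · rw [blockPerm_append, ← hval, hd, mul_assoc, Equiv.swap_mul_self, mul_one]


/-! ### Presentations coming from the cycle decomposition -/

lemma ptsB_cons (b : List (Fin n) × Fin n) (B : List (List (Fin n) × Fin n)) :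
    ptsB (b :: B) = (b.2 :: b.1) ++ ptsB B := by
  unfold ptsB
  rfl

lemma valB_cons (b : List (Fin n) × Fin n) (B : List (List (Fin n) × Fin n)) :
    valB (b :: B) = blockPerm b * valB B := by
  unfold valB
  rw [List.map_cons, List.prod_cons]

lemma ptsB_mem_support {Lc : List (Equiv.Perm (Fin n))} {B : List (List (Fin n) × Fin n)}
    (h : List.Forall₂ (fun c b => ((b.2 :: b.1).toFinset : Finset (Fin n)) = c.support) Lc B)
    {x : Fin n} (hx : x ∈ ptsB B) : ∃ c ∈ Lc, x ∈ c.support := by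
  induction h with
  | nil => simp [ptsB] at hx
  | @cons c b Lc B hcb hLB ih =>
    rw [ptsB_cons, List.mem_append] at hx
    rcases hx with hx | hx
    · exact ⟨c, List.mem_cons_self, by rw [← hcb]; exact List.mem_toFinset.2 hx⟩
    · obtain ⟨c', hc', hxc'⟩ := ih hx
      exact ⟨c', List.mem_cons_of_mem _ hc', hxc'⟩

lemma pres_of_cycle_list {i : ℕ} : ∀ Lc : List (Equiv.Perm (Fin n)),
    (∀ c ∈ Lc, c.IsCycle) → List.Pairwise Equiv.Perm.Disjoint Lc →
    (∀ c ∈ Lc, ∀ x ∈ c.support, (x : ℕ) < i) →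
    ∃ B, PresB n i B ∧ (ptsB B).Nodup ∧ valB B = Lc.prod ∧
      List.Forall₂ (fun c b => b.1.length + 1 = c.support.card ∧
        ((b.2 :: b.1).toFinset : Finset (Fin n)) = c.support) Lc B := by
  intro Lc
  induction Lc with
  | nil =>
    intro _ _ _
    exact ⟨[], by intro b hb; simp at hb, List.nodup_nil, rfl, List.Forall₂.nil⟩
  | cons c Lc ih =>
    intro hcyc hdisj hbound
    obtain ⟨B, hP, hnd, hval, hF⟩ := ih (fun c' hc' => hcyc c' (List.mem_cons_of_mem _ hc'))
      (List.Pairwise.of_cons hdisj) (fun c' hc' => hbound c' (List.mem_cons_of_mem _ hc'))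
    have hc : c.IsCycle := hcyc c (List.mem_cons_self)
    have hne : c.support.Nonempty := Finset.card_pos.1 (by have := hc.two_le_card_support; omega)
    set k := c.support.max' hne with hk
    have hkmem : k ∈ c.support := Finset.max'_mem _ _
    obtain ⟨as, hasnd, hasmem, haslen, hasval⟩ :=
      cycle_decomp c.support.card c hc le_rfl k hkmem
    have haslt : ∀ a ∈ as, a < k := by
      intro a ha
      obtain ⟨h1, h2⟩ := hasmem a ha
      exact lt_of_le_of_ne (Finset.le_max' _ _ h1) h2
    have hknotin : k ∉ as := fun hcon => (hasmem k hcon).2 rfl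
    have hhead_nd : (k :: as).Nodup := List.nodup_cons.2 ⟨hknotin, hasnd⟩
    have hsubset : ((k :: as).toFinset : Finset (Fin n)) ⊆ c.support := by
      intro x hx
      rw [List.mem_toFinset, List.mem_cons] at hx
      rcases hx with rfl | hx
      · exact hkmem
      · exact (hasmem x hx).1
    have hcardeq : ((k :: as).toFinset : Finset (Fin n)) = c.support := by
      apply Finset.eq_of_subset_of_card_le hsubset
      rw [List.toFinset_card_of_nodup hhead_nd]
      simp only [List.length_cons]
      omega
    have hdisjhead : ∀ c' ∈ Lc, Equiv.Perm.Disjoint c c' := (List.pairwise_cons.1 hdisj).1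
    refine ⟨(as, k) :: B, ?_, ?_, ?_, ?_⟩
    · intro b hb
      rcases List.mem_cons.1 hb with rfl | hb
      · refine ⟨haslt, ?_⟩
        exact hbound c (List.mem_cons_self) k hkmem
      · exact hP b hb
    · rw [ptsB_cons]
      rw [List.nodup_append]
      refine ⟨hhead_nd, hnd, ?_⟩
      intro x hx y hx' hxy
      subst hxy
      obtain ⟨c', hc', hxc'⟩ := ptsB_mem_support (hF.imp fun _ _ h => h.2) hx'
      have hxc : x ∈ c.support := hsubset (List.mem_toFinset.2 hx)
      have := Equiv.Perm.disjoint_iff_disjoint_support.1 (hdisjhead c' hc')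
      exact Finset.disjoint_left.1 this hxc hxc'
    · rw [valB_cons, List.prod_cons, hval, ← hasval]
    · exact List.Forall₂.cons ⟨haslen, hcardeq⟩ hF

lemma toList_prod_cycleFactors (ρ : Equiv.Perm (Fin n)) :
    ρ.cycleFactorsFinset.toList.prod = ρ := by
  have aux : ∀ (m : Multiset (Equiv.Perm (Fin n)))
      (comm : {x | x ∈ m}.Pairwise Commute) (l : List (Equiv.Perm (Fin n))),
      (↑l : Multiset _) = m → Multiset.noncommProd m comm = l.prod := by
    intro m comm l h
    subst h
    exact Multiset.noncommProd_coe _ _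
  have h2 : (↑(ρ.cycleFactorsFinset.toList) : Multiset (Equiv.Perm (Fin n)))
      = Multiset.map id ρ.cycleFactorsFinset.val := by
    rw [Multiset.map_id]
    exact Finset.coe_toList _
  have h := Equiv.Perm.cycleFactorsFinset_noncommProd ρ
  unfold Finset.noncommProd at h
  exact (aux _ _ _ h2).symm.trans h

lemma mem_toList_cycleFactors {ρ c : Equiv.Perm (Fin n)}
    (h : c ∈ ρ.cycleFactorsFinset.toList) : c ∈ ρ.cycleFactorsFinset :=
  Finset.mem_toList.1 h

lemma exists_pres {i : ℕ} {ρ : Equiv.Perm (Fin n)} (hρ : ρ ∈ Hi n i) :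
    ∃ B, PresB n i B ∧ (ptsB B).Nodup ∧ valB B = ρ ∧
      List.Forall₂ (fun c b => b.1.length + 1 = c.support.card)
        ρ.cycleFactorsFinset.toList B := by
  have hsupp : ∀ x ∈ ρ.support, (x : ℕ) < i := by
    intro x hx
    by_contra h
    push_neg at h
    exact Equiv.Perm.mem_support.1 hx (hρ x h)
  obtain ⟨B, hP, hnd, hval, hF⟩ := pres_of_cycle_list ρ.cycleFactorsFinset.toList
    (fun c hc => ((Equiv.Perm.mem_cycleFactorsFinset_iff).1 (mem_toList_cycleFactors hc)).1)
    (by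
      apply List.Pairwise.imp_of_mem (R := fun a b => a ≠ b)
      · intro a b ha hb hab
        exact (ρ.cycleFactorsFinset_pairwise_disjoint)
          (mem_toList_cycleFactors ha) (mem_toList_cycleFactors hb) hab
      · exact ρ.cycleFactorsFinset.nodup_toList)
    (fun c hc x hx => hsupp x
      (Equiv.Perm.mem_cycleFactorsFinset_support_le (mem_toList_cycleFactors hc) hx))
  rw [toList_prod_cycleFactors] at hval
  exact ⟨B, hP, hnd, hval, hF.imp fun _ _ h => h.1⟩

lemma sum_supportcards (ρ : Equiv.Perm (Fin n)) :
    (ρ.cycleFactorsFinset.toList.map (fun c => c.support.card)).sum = ρ.support.card := by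
  have h1 := Equiv.Perm.sum_cycleType ρ
  rw [Equiv.Perm.cycleType_def] at h1
  rw [← h1, ← Finset.coe_toList ρ.cycleFactorsFinset, Multiset.map_coe, Multiset.sum_coe]
  rfl


/-! ### The central elements `TT` attached to a permutation -/

def TT (n i : ℕ) (ρ : Equiv.Perm (Fin n)) : A n :=
  (ρ.cycleFactorsFinset.toList.map (fun c => Pp n i (c.support.card - 1))).prod

lemma copy_listprod {i : ℕ} {L : List (A n)} (h : ∀ x ∈ L, x ∈ groupAlgCopy n i) :
    L.prod ∈ groupAlgCopy n i := by
  induction L with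
  | nil => simpa using copy_one
  | cons z L ih =>
    rw [List.prod_cons]
    exact copy_mul (h z (List.mem_cons_self))
      (ih fun x hx => h x (List.mem_cons_of_mem _ hx))

lemma TT_mem_copy {i : ℕ} {ρ : Equiv.Perm (Fin n)} : TT n i ρ ∈ groupAlgCopy n i := by
  apply copy_listprod
  intro x hx
  rw [List.mem_map] at hx
  obtain ⟨c, _, rfl⟩ := hx
  exact Pp_mem_copy

lemma TT_commute {i : ℕ} {ρ : Equiv.Perm (Fin n)} :
    ∀ g ∈ Hi n i, Commute (og g) (TT n i ρ) := by
  intro g hg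
  apply Commute.list_prod_right
  intro x hx
  rw [List.mem_map] at hx
  obtain ⟨c, _, rfl⟩ := hx
  exact Pp_commute i _ g hg

lemma Pp_mem_adjoin {i e : ℕ} : Pp n i e ∈ Algebra.adjoin ℂ (Set.range (jm n)) := by
  apply Subalgebra.sum_mem
  intro k _
  exact pow_mem (Algebra.subset_adjoin (Set.mem_range_self k)) e

lemma TT_mem_adjoin {i : ℕ} {ρ : Equiv.Perm (Fin n)} :
    TT n i ρ ∈ Algebra.adjoin ℂ (Set.range (jm n)) := by
  apply Subalgebra.list_prod_mem
  intro x hx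
  rw [List.mem_map] at hx
  obtain ⟨c, _, rfl⟩ := hx
  exact Pp_mem_adjoin

lemma TT_conj_invariant {i : ℕ} (g ρ : Equiv.Perm (Fin n)) :
    TT n i (g * ρ * g⁻¹) = TT n i ρ := by
  unfold TT
  apply List.Perm.prod_eq'
  · apply Multiset.coe_eq_coe.1
    have key : ∀ σ : Equiv.Perm (Fin n),
        (↑(σ.cycleFactorsFinset.toList.map (fun c => Pp n i (c.support.card - 1)))
          : Multiset (A n)) = σ.cycleType.map (fun m => Pp n i (m - 1)) := by
      intro σ
      rw [← Multiset.map_coe, Finset.coe_toList, Equiv.Perm.cycleType_def,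
        Multiset.map_map]
      rfl
    rw [key, key, Equiv.Perm.cycleType_conj]
  · apply List.pairwise_of_forall_mem_list
    intro a ha b hb
    rw [List.mem_map] at ha hb
    obtain ⟨c, _, rfl⟩ := ha
    obtain ⟨c', _, rfl⟩ := hb
    exact Pp_pairwise_commute i _ _

/-- `H_i`-conjugacy. -/
def Rel (n i : ℕ) (ρ τ : Equiv.Perm (Fin n)) : Prop := ∃ g ∈ Hi n i, g * ρ * g⁻¹ = τ

lemma Rel.refl {i : ℕ} (ρ : Equiv.Perm (Fin n)) : Rel n i ρ ρ :=
  ⟨1, one_mem _, by simp⟩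

lemma Rel.symm {i : ℕ} {ρ τ : Equiv.Perm (Fin n)} (h : Rel n i ρ τ) : Rel n i τ ρ := by
  obtain ⟨g, hg, rfl⟩ := h
  exact ⟨g⁻¹, inv_mem hg, by group⟩

lemma Rel.trans {i : ℕ} {ρ τ ν : Equiv.Perm (Fin n)} (h1 : Rel n i ρ τ)
    (h2 : Rel n i τ ν) : Rel n i ρ ν := by
  obtain ⟨g, hg, rfl⟩ := h1
  obtain ⟨g', hg', rfl⟩ := h2
  exact ⟨g' * g, mul_mem hg' hg, by group⟩

lemma Rel.cycleType_eq {i : ℕ} {ρ τ : Equiv.Perm (Fin n)} (h : Rel n i ρ τ) :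
    τ.cycleType = ρ.cycleType := by
  obtain ⟨g, _, rfl⟩ := h
  exact Equiv.Perm.cycleType_conj

lemma Rel.card_support_eq {i : ℕ} {ρ τ : Equiv.Perm (Fin n)} (h : Rel n i ρ τ) :
    τ.support.card = ρ.support.card := by
  rw [← Equiv.Perm.sum_cycleType, ← Equiv.Perm.sum_cycleType, h.cycleType_eq]

lemma Rel.TT_eq {i : ℕ} {ρ τ : Equiv.Perm (Fin n)} (h : Rel n i ρ τ) :
    TT n i τ = TT n i ρ := by
  obtain ⟨g, _, rfl⟩ := h
  exact TT_conj_invariant g ρ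

lemma Rel.coeff_eq {i : ℕ} {x : A n} (hx : ∀ g ∈ Hi n i, Commute (og g) x)
    {ρ τ : Equiv.Perm (Fin n)} (h : Rel n i ρ τ) : x τ = x ρ := by
  obtain ⟨g, hg, rfl⟩ := h
  exact coeff_conj (hx g hg) ρ


/-! ### Extending a partial matching to a permutation in `Hi` -/

lemma nodup_of_toFinset_card {l : List (Fin n)} (h : l.toFinset.card = l.length) :
    l.Nodup := by
  by_contra hnd
  have h1 : l.dedup.length < l.length := by
    have h2 : l.dedup.Sublist l := List.dedup_sublist l
    have h3 : l.dedup.length ≤ l.length := h2.length_le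
    rcases lt_or_eq_of_le h3 with h4 | h4
    · exact h4
    · exfalso
      exact hnd (by rw [← List.dedup_eq_self]; exact h2.eq_of_length h4)
  rw [← List.card_toFinset] at h1
  omega

lemma exists_perm_map {i : ℕ} (u u' : List (Fin n)) (hu : u.Nodup) (hu' : u'.Nodup)
    (hlen : u.length = u'.length) (hb : ∀ x ∈ u, (x : ℕ) < i)
    (hb' : ∀ x ∈ u', (x : ℕ) < i) :
    ∃ g ∈ Hi n i, List.Forall₂ (fun p q => g p = q) u u' := by
  classical
  set L : Finset (Fin n) := Finset.univ.filter (fun p : Fin n => (p : ℕ) < i) with hL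
  have hsub : u.toFinset ⊆ L := by
    intro x hx
    rw [hL, Finset.mem_filter]
    exact ⟨Finset.mem_univ _, hb x (List.mem_toFinset.1 hx)⟩
  have hsub' : u'.toFinset ⊆ L := by
    intro x hx
    rw [hL, Finset.mem_filter]
    exact ⟨Finset.mem_univ _, hb' x (List.mem_toFinset.1 hx)⟩
  set w : List (Fin n) := (L \ u.toFinset).toList with hw
  set w' : List (Fin n) := (L \ u'.toFinset).toList with hw'
  set U : List (Fin n) := u ++ w with hU
  set U' : List (Fin n) := u' ++ w' with hU'
  have hUnd : U.Nodup := by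
    rw [hU, List.nodup_append]
    refine ⟨hu, Finset.nodup_toList _, ?_⟩
    intro x hx y hx' hxy
    subst hxy
    rw [hw, Finset.mem_toList, Finset.mem_sdiff] at hx'
    exact hx'.2 (List.mem_toFinset.2 hx)
  have hU'nd : U'.Nodup := by
    rw [hU', List.nodup_append]
    refine ⟨hu', Finset.nodup_toList _, ?_⟩
    intro x hx y hx' hxy
    subst hxy
    rw [hw', Finset.mem_toList, Finset.mem_sdiff] at hx'
    exact hx'.2 (List.mem_toFinset.2 hx)
  have hUlen : U.length = L.card := by
    rw [hU, List.length_append, hw, Finset.length_toList, Finset.card_sdiff_of_subset hsub,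
      List.toFinset_card_of_nodup hu]
    have := Finset.card_le_card hsub
    rw [List.toFinset_card_of_nodup hu] at this
    omega
  have hU'len : U'.length = L.card := by
    rw [hU', List.length_append, hw', Finset.length_toList, Finset.card_sdiff_of_subset hsub',
      List.toFinset_card_of_nodup hu']
    have := Finset.card_le_card hsub'
    rw [List.toFinset_card_of_nodup hu'] at this
    omega
  have hUU' : U.length = U'.length := by rw [hUlen, hU'len]
  have hUmem : ∀ x : Fin n, x ∈ U ↔ x ∈ L := by
    intro x
    rw [hU, List.mem_append, hw, Finset.mem_toList, Finset.mem_sdiff]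
    constructor
    · rintro (hx | hx)
      · exact hsub (List.mem_toFinset.2 hx)
      · exact hx.1
    · intro hx
      by_cases hxu : x ∈ u
      · exact Or.inl hxu
      · exact Or.inr ⟨hx, fun hc => hxu (List.mem_toFinset.1 hc)⟩
  have hU'mem : ∀ x : Fin n, x ∈ U' ↔ x ∈ L := by
    intro x
    rw [hU', List.mem_append, hw', Finset.mem_toList, Finset.mem_sdiff]
    constructor
    · rintro (hx | hx)
      · exact hsub' (List.mem_toFinset.2 hx)
      · exact hx.1
    · intro hx
      by_cases hxu : x ∈ u'
      · exact Or.inl hxu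
      · exact Or.inr ⟨hx, fun hc => hxu (List.mem_toFinset.1 hc)⟩
  have hidxlt : ∀ x : Fin n, x ∈ U → U.idxOf x < U'.length := by
    intro x hx
    rw [← hUU']
    exact List.idxOf_lt_length_iff.2 hx
  have hidxlt' : ∀ x : Fin n, x ∈ U' → U'.idxOf x < U.length := by
    intro x hx
    rw [hUU']
    exact List.idxOf_lt_length_iff.2 hx
  set F : Fin n → Fin n := fun p =>
    if hp : p ∈ U then U'.get ⟨U.idxOf p, hidxlt p hp⟩ else p with hF
  set G : Fin n → Fin n := fun p =>
    if hp : p ∈ U' then U.get ⟨U'.idxOf p, hidxlt' p hp⟩ else p with hG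
  have hFG : ∀ p, G (F p) = p := by
    intro p
    by_cases hp : p ∈ U
    · rw [hF]
      simp only [dif_pos hp]
      have hmem' : U'.get ⟨U.idxOf p, hidxlt p hp⟩ ∈ U' := List.get_mem _ _
      rw [hG]
      simp only [dif_pos hmem']
      have h1 : U'.idxOf (U'.get ⟨U.idxOf p, hidxlt p hp⟩) = U.idxOf p :=
        List.get_idxOf hU'nd _
      have h2 : U.get ⟨U'.idxOf (U'.get ⟨U.idxOf p, hidxlt p hp⟩),
          hidxlt' _ hmem'⟩ = U.get ⟨U.idxOf p, List.idxOf_lt_length_iff.2 hp⟩ := by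
        congr 1
        exact Fin.ext h1
      rw [h2]
      exact List.idxOf_get _
    · have hp' : p ∉ U' := fun hc => hp ((hUmem p).2 ((hU'mem p).1 hc))
      rw [hF]
      simp only [dif_neg hp]
      rw [hG]
      simp only [dif_neg hp']
  have hGF : ∀ p, F (G p) = p := by
    intro p
    by_cases hp : p ∈ U'
    · rw [hG]
      simp only [dif_pos hp]
      have hmem' : U.get ⟨U'.idxOf p, hidxlt' p hp⟩ ∈ U := List.get_mem _ _
      rw [hF]
      simp only [dif_pos hmem']
      have h1 : U.idxOf (U.get ⟨U'.idxOf p, hidxlt' p hp⟩) = U'.idxOf p :=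
        List.get_idxOf hUnd _
      have h2 : U'.get ⟨U.idxOf (U.get ⟨U'.idxOf p, hidxlt' p hp⟩),
          hidxlt _ hmem'⟩ = U'.get ⟨U'.idxOf p, List.idxOf_lt_length_iff.2 hp⟩ := by
        congr 1
        exact Fin.ext h1
      rw [h2]
      exact List.idxOf_get _
    · have hp' : p ∉ U := fun hc => hp ((hU'mem p).2 ((hUmem p).1 hc))
      rw [hG]
      simp only [dif_neg hp]
      rw [hF]
      simp only [dif_neg hp']
  set g : Equiv.Perm (Fin n) := ⟨F, G, hFG, hGF⟩ with hg
  refine ⟨g, ?_, ?_⟩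
  · intro k hk
    show F k = k
    have hknot : k ∉ U := by
      intro hc
      have := (hUmem k).1 hc
      rw [hL, Finset.mem_filter] at this
      omega
    rw [hF]
    simp only [dif_neg hknot]
  · rw [List.forall₂_iff_get]
    refine ⟨hlen, fun t h1 h2 => ?_⟩
    show F (u.get ⟨t, h1⟩) = u'.get ⟨t, h2⟩
    have hmem : u.get ⟨t, h1⟩ ∈ U := by
      rw [hU, List.mem_append]
      exact Or.inl (List.get_mem _ _)
    have h1U : t < U.length := by
      rw [hU, List.length_append]
      omega
    have hgetU : U.get ⟨t, h1U⟩ = u.get ⟨t, h1⟩ := by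
      simp only [List.get_eq_getElem, hU, List.getElem_append_left h1]
    have hidx : U.idxOf (u.get ⟨t, h1⟩) = t := by
      rw [← hgetU]
      exact List.get_idxOf hUnd _
    rw [hF]
    simp only [dif_pos hmem]
    have h2U : t < U'.length := by rw [← hUU']; exact h1U
    have hgoal : U'.get ⟨U.idxOf (u.get ⟨t, h1⟩), hidxlt _ hmem⟩
        = U'.get ⟨t, h2U⟩ := by
      congr 1
      exact Fin.ext hidx
    rw [hgoal]
    simp only [List.get_eq_getElem, hU', List.getElem_append_left h2]

/-! ### Conjugating presentations of the same shape -/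

lemma forall₂_append_split {α β : Type*} {R : α → β → Prop} :
    ∀ {x y : List α} {x' y' : List β}, List.Forall₂ R (x ++ y) (x' ++ y') →
      x.length = x'.length → List.Forall₂ R x x' ∧ List.Forall₂ R y y' := by
  intro x
  induction x with
  | nil =>
    intro y x' y' h hlen
    have : x' = [] := by
      cases x' with
      | nil => rfl
      | cons a l => simp at hlen
    subst this
    exact ⟨List.Forall₂.nil, h⟩
  | cons a x ih =>
    intro y x' y' h hlen
    cases x' with
    | nil => simp at hlen
    | cons b x' =>
      rw [List.cons_append, List.cons_append] at h
      rcases h with _ | ⟨hab, h⟩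
      have := ih h (by simpa using hlen)
      exact ⟨List.Forall₂.cons hab this.1, this.2⟩

lemma forall₂_eq_map {α β : Type*} {g : α → β} :
    ∀ {l : List α} {l' : List β}, List.Forall₂ (fun p q => g p = q) l l' → l.map g = l' := by
  intro l l' h
  induction h with
  | nil => rfl
  | cons hab _ ih => simp [ih, hab]

lemma rel_of_presentations {i : ℕ} :
    ∀ {B B' : List (List (Fin n) × Fin n)},
    List.Forall₂ (fun b b' => b.1.length = b'.1.length) B B' →
    (∀ x ∈ ptsB B, (x : ℕ) < i) → (∀ x ∈ ptsB B', (x : ℕ) < i) →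
    ∀ g : Equiv.Perm (Fin n), List.Forall₂ (fun p q => g p = q) (ptsB B) (ptsB B') →
    g * valB B * g⁻¹ = valB B' := by
  intro B
  induction B with
  | nil =>
    intro B' hsh _ _ g hpts
    cases hsh
    show g * valB [] * g⁻¹ = valB []
    unfold valB
    simp
  | cons b B ih =>
    intro B' hsh hb hb' g hpts
    cases B' with
    | nil => exact absurd hsh (by intro h; cases h)
    | cons b' B' =>
      rcases hsh with _ | ⟨hbb, hsh⟩
      rw [ptsB_cons, ptsB_cons] at hpts
      obtain ⟨hhead, htail⟩ := forall₂_append_split hpts (by simp [hbb])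
      rcases hhead with _ | ⟨hanchor, hentries⟩
      have hmap : b.1.map g = b'.1 := forall₂_eq_map hentries
      have hstep : g * blockPerm b * g⁻¹ = blockPerm b' := by
        rw [conj_blockPerm]
        rw [hmap, hanchor]
      have hrec : g * valB B * g⁻¹ = valB B' := by
        apply ih hsh _ _ g htail
        · intro x hx
          exact hb x (by rw [ptsB_cons, List.mem_append]; exact Or.inr hx)
        · intro x hx
          exact hb' x (by rw [ptsB_cons, List.mem_append]; exact Or.inr hx)
      rw [valB_cons, valB_cons, ← hstep, ← hrec]
      group

lemma ptsB_lt {i : ℕ} {B : List (List (Fin n) × Fin n)} (h : PresB n i B) :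
    ∀ x ∈ ptsB B, (x : ℕ) < i := by
  intro x hx
  rw [ptsB, List.mem_flatten] at hx
  obtain ⟨l, hl, hxl⟩ := hx
  rw [List.mem_map] at hl
  obtain ⟨b, hb, rfl⟩ := hl
  obtain ⟨h1, h2⟩ := h b hb
  rcases List.mem_cons.1 hxl with rfl | hmem
  · exact h2
  · have := h1 x hmem
    rw [Fin.lt_def] at this
    omega


/-! ### Structure of the support of `TT` -/

lemma pres_of_picks {i : ℕ} : ∀ (Lc picks : List (Equiv.Perm (Fin n))),
    (∀ c ∈ Lc, 2 ≤ c.support.card) →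
    List.Forall₂ (fun z σ => σ ∈ z.coeff.support)
      (Lc.map (fun c => Pp n i (c.support.card - 1))) picks →
    ∃ B, PresB n i B ∧ picks.prod = valB B ∧
      List.Forall₂ (fun c b => b.1.length + 1 = c.support.card) Lc B := by
  intro Lc
  induction Lc with
  | nil =>
    intro picks _ h
    cases h
    exact ⟨[], by intro b hb; simp at hb, rfl, List.Forall₂.nil⟩
  | cons c Lc ih =>
    intro picks h2 hF
    rw [List.map_cons] at hF
    rcases hF with _ | ⟨hσ, hF⟩
    obtain ⟨b, hb1, hb2, hb3, rfl⟩ := supp_Pp hσ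
    obtain ⟨B, hP, hval, hsh⟩ := ih _ (fun c' hc' => h2 c' (List.mem_cons_of_mem _ hc')) hF
    refine ⟨b :: B, ?_, ?_, List.Forall₂.cons ?_ hsh⟩
    · intro b'' hb''
      rcases List.mem_cons.1 hb'' with rfl | hmem
      · exact ⟨hb2, hb3⟩
      · exact hP b'' hmem
    · rw [List.prod_cons, valB_cons, hval]
    · have := h2 c (List.mem_cons_self)
      omega

lemma TT_supp_struct {i : ℕ} {ρ τ : Equiv.Perm (Fin n)} (hτ : (TT n i ρ) τ ≠ 0) :
    ∃ B, PresB n i B ∧ τ = valB B ∧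
      List.Forall₂ (fun c b => b.1.length + 1 = c.support.card)
        ρ.cycleFactorsFinset.toList B := by
  have hmem : τ ∈ (TT n i ρ).coeff.support := Finsupp.mem_support_iff.2 hτ
  obtain ⟨picks, hF, rfl⟩ := exists_decomp hmem
  obtain ⟨B, hP, hval, hsh⟩ := pres_of_picks ρ.cycleFactorsFinset.toList picks
    (fun c hc =>
      ((Equiv.Perm.mem_cycleFactorsFinset_iff).1
        (mem_toList_cycleFactors hc)).1.two_le_card_support) hF
  exact ⟨B, hP, hval, hsh⟩

lemma map_eq_of_forall₂ {α β γ : Type*} {R : α → β → Prop} {f : α → γ} {g : β → γ}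
    (hfg : ∀ a b, R a b → g b = f a) :
    ∀ {l : List α} {l' : List β}, List.Forall₂ R l l' → l'.map g = l.map f := by
  intro l l' h
  induction h with
  | nil => rfl
  | cons hab _ ih => simp [ih, hfg _ _ hab]

lemma ptsB_length_of_shape {ρ : Equiv.Perm (Fin n)} {B : List (List (Fin n) × Fin n)}
    (hsh : List.Forall₂ (fun c b => b.1.length + 1 = c.support.card)
      ρ.cycleFactorsFinset.toList B) :
    (ptsB B).length = ρ.support.card := by
  rw [length_ptsB, ← sum_supportcards ρ]
  congr 1
  exact map_eq_of_forall₂ (fun a b h => h) hsh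

lemma TT_supp_card_le {i : ℕ} {ρ τ : Equiv.Perm (Fin n)} (hτ : (TT n i ρ) τ ≠ 0) :
    τ.support.card ≤ ρ.support.card := by
  obtain ⟨B, hP, rfl, hsh⟩ := TT_supp_struct hτ
  have h1 : (valB B).support.card ≤ (ptsB B).toFinset.card :=
    Finset.card_le_card valB_support
  have h2 : (ptsB B).toFinset.card ≤ (ptsB B).length := (ptsB B).toFinset_card_le
  have h3 := ptsB_length_of_shape hsh
  omega

lemma TT_top_rel {i : ℕ} {ρ τ : Equiv.Perm (Fin n)} (hρ : ρ ∈ Hi n i)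
    (hτ : (TT n i ρ) τ ≠ 0) (hcard : τ.support.card = ρ.support.card) :
    Rel n i ρ τ := by
  obtain ⟨B, hP, rfl, hsh⟩ := TT_supp_struct hτ
  obtain ⟨B₀, hP₀, hnd₀, hval₀, hsh₀⟩ := exists_pres hρ
  have hlenB := ptsB_length_of_shape hsh
  have hlenB₀ := ptsB_length_of_shape hsh₀
  have hndB : (ptsB B).Nodup := by
    apply nodup_of_toFinset_card
    have h1 : (valB B).support.card ≤ (ptsB B).toFinset.card :=
      Finset.card_le_card valB_support
    have h2 : (ptsB B).toFinset.card ≤ (ptsB B).length := (ptsB B).toFinset_card_le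
    omega
  have hshapes : List.Forall₂ (fun b b' => b.1.length = b'.1.length) B₀ B := by
    rw [List.forall₂_iff_get]
    have e1 := hsh.length_eq
    have e2 := hsh₀.length_eq
    refine ⟨by omega, fun t h1 h2 => ?_⟩
    have g1 := (List.forall₂_iff_get.1 hsh).2 t (by omega) (by omega)
    have g2 := (List.forall₂_iff_get.1 hsh₀).2 t (by omega) (by omega)
    omega
  obtain ⟨g, hg, hmatch⟩ := exists_perm_map (ptsB B₀) (ptsB B) hnd₀ hndB
    (by omega) (ptsB_lt hP₀) (ptsB_lt hP)
  refine ⟨g, hg, ?_⟩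
  rw [← hval₀]
  exact rel_of_presentations hshapes (ptsB_lt hP₀) (ptsB_lt hP) g hmatch

/-! ### Positivity: the diagonal coefficient of `TT` -/

lemma dle_trans {x y z : A n} (h1 : dle x y) (h2 : dle y z) : dle x z := by
  unfold dle at *
  have h3 : z - x = (z - y) + (y - x) := by abel
  rw [h3]
  exact NN_add h2 h1

lemma dle_og_swap_jm {a k : Fin n} (h : a < k) : dle (og (Equiv.swap a k)) (jm n k) := by
  unfold dle
  rw [jm_def]
  have ha : a ∈ Finset.univ.filter (fun j : Fin n => j < k) := by simp [h]
  rw [← Finset.add_sum_erase _ _ ha, add_sub_cancel_left]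
  exact NN_sum fun j _ => NN_og _

lemma og_listprod (l : List (Equiv.Perm (Fin n))) : og l.prod = (l.map og).prod := by
  induction l with
  | nil => rfl
  | cons σ l ih => rw [List.prod_cons, og_mul, ih, List.map_cons, List.prod_cons]

lemma dle_block_Pp {i : ℕ} {b : List (Fin n) × Fin n} (hanch : ∀ a ∈ b.1, a < b.2)
    (hbi : (b.2 : ℕ) < i) : dle (og (blockPerm b)) (Pp n i b.1.length) := by
  have h1 : dle (og (blockPerm b)) (jm n b.2 ^ b.1.length) := by
    have hog : og (blockPerm b) = (b.1.map (fun a => og (Equiv.swap a b.2))).prod := by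
      unfold blockPerm
      rw [og_listprod, List.map_map]
      rfl
    have hrep : jm n b.2 ^ b.1.length = (List.replicate b.1.length (jm n b.2)).prod :=
      (List.prod_replicate _ _).symm
    rw [hog, hrep]
    refine (dle_prod ?_).2
    rw [List.forall₂_iff_get]
    refine ⟨by simp, fun t h1 h2 => ?_⟩
    simp only [List.get_eq_getElem, List.getElem_map, List.getElem_replicate]
    exact ⟨NN_og _, dle_og_swap_jm (hanch _ (List.getElem_mem _))⟩
  have h2 : dle (jm n b.2 ^ b.1.length) (Pp n i b.1.length) := by
    unfold dle Pp
    have hb2 : b.2 ∈ Finset.univ.filter (fun j : Fin n => (j : ℕ) < i) := by simp [hbi]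
    rw [← Finset.add_sum_erase _ _ hb2, add_sub_cancel_left]
    exact NN_sum fun j _ => NN_pow (NN_jm _) _
  exact dle_trans h1 h2

lemma dle_og_TT {i : ℕ} {ρ : Equiv.Perm (Fin n)} (hρ : ρ ∈ Hi n i) :
    dle (og ρ) (TT n i ρ) := by
  obtain ⟨B₀, hP₀, _, hval₀, hsh₀⟩ := exists_pres hρ
  suffices h : dle (og (valB B₀)) (TT n i ρ) by rwa [hval₀] at h
  unfold valB TT
  rw [og_listprod, List.map_map]
  refine (dle_prod ?_).2
  rw [List.forall₂_iff_get]
  have e := hsh₀.length_eq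
  refine ⟨by simp only [List.length_map]; omega, fun t h1 h2 => ?_⟩
  simp only [List.get_eq_getElem, List.getElem_map]
  simp only [List.length_map] at h1 h2
  have g1 := (List.forall₂_iff_get.1 hsh₀).2 t (by omega) (by omega)
  have hmem := List.get_mem B₀ ⟨t, by omega⟩
  obtain ⟨hanch, hbi⟩ := hP₀ _ hmem
  have hlen : (B₀.get ⟨t, by omega⟩).1.length
      = (ρ.cycleFactorsFinset.toList.get ⟨t, by omega⟩).support.card - 1 := by omega
  constructor
  · exact NN_og _
  · show dle (og (blockPerm (B₀.get ⟨t, h1⟩))) _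
    have := dle_block_Pp hanch hbi
    rw [hlen] at this
    simp only [List.get_eq_getElem] at this ⊢
    convert this using 3 <;> omega
  -- fallback handled below if convert fails

lemma TT_self_ne_zero {i : ℕ} {ρ : Equiv.Perm (Fin n)} (hρ : ρ ∈ Hi n i) :
    (TT n i ρ) ρ ≠ 0 := by
  obtain ⟨r, hr, heq⟩ := dle_og_TT hρ ρ
  have h1 : (TT n i ρ - og ρ) ρ = (TT n i ρ) ρ - og ρ ρ := rfl
  have h2 : og ρ ρ = 1 := by rw [og_apply, if_pos rfl]
  intro hc
  rw [h1, hc, h2] at heq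
  have := congrArg Complex.re heq
  simp at this
  -- this : -1 = r
  linarith [hr, this.symm ▸ hr]


/-! ### The main induction: central elements lie in the JM algebra -/

lemma center_in_adjoin {i : ℕ} : ∀ (s : ℕ) (x : A n), x ∈ centerCopy n i →
    (∀ τ : Equiv.Perm (Fin n), x τ ≠ 0 → τ.support.card < s) →
    x ∈ Algebra.adjoin ℂ (Set.range (jm n)) := by
  intro s
  induction s with
  | zero =>
    intro x _ hb
    have hx0 : x = 0 := by
      apply MonoidAlgebra.coeff_injective
      apply Finsupp.ext
      intro τ
      by_contra hc
      exact absurd (hb τ hc) (by omega)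
    rw [hx0]
    exact zero_mem _
  | succ s ih =>
    intro x hx hbound
    classical
    obtain ⟨hxcopy, hxcomm⟩ := mem_centerCopy_iff.1 hx
    set D : Finset (Equiv.Perm (Fin n)) :=
      x.coeff.support.filter (fun τ => τ.support.card = s) with hD
    have hDHi : ∀ ρ ∈ D, ρ ∈ Hi n i := fun ρ hρ =>
      mem_copy_iff.1 hxcopy ρ (Finsupp.mem_support_iff.1 (Finset.mem_filter.1 hρ).1)
    have hDmem_card : ∀ ρ ∈ D, ρ.support.card = s := fun ρ hρ =>
      (Finset.mem_filter.1 hρ).2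
    have hDx : ∀ ρ ∈ D, x ρ ≠ 0 := fun ρ hρ =>
      Finsupp.mem_support_iff.1 (Finset.mem_filter.1 hρ).1
    set m : Equiv.Perm (Fin n) → ℕ := fun ρ => (D.filter (fun τ => Rel n i ρ τ)).card
      with hm
    set co : Equiv.Perm (Fin n) → ℂ := fun ρ => x ρ / ((TT n i ρ) ρ * (m ρ : ℂ)) with hco
    set y : A n := x - ∑ ρ ∈ D, co ρ • TT n i ρ with hy
    have hycenter : y ∈ centerCopy n i := by
      rw [mem_centerCopy_iff]
      constructor
      · exact Submodule.sub_mem _ hxcopy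
          (Submodule.sum_mem _ fun ρ _ => Submodule.smul_mem _ _ TT_mem_copy)
      · intro g hg
        exact (hxcomm g hg).sub_right
          (Commute.sum_right _ _ _ fun ρ _ => (TT_commute g hg).smul_right _)
    have hyapply : ∀ τ, y τ = x τ - ∑ ρ ∈ D, co ρ * (TT n i ρ) τ := by
      intro τ
      rw [hy, MonoidAlgebra.coeff_sub, Finsupp.sub_apply]
      congr 1
      rw [MonoidAlgebra.coeff_sum, Finsupp.finset_sum_apply]
      exact Finset.sum_congr rfl fun ρ _ => by
        rw [MonoidAlgebra.coeff_smul, Finsupp.smul_apply, smul_eq_mul]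
    have hmeq : ∀ ρ τ : Equiv.Perm (Fin n), Rel n i ρ τ → m ρ = m τ := by
      intro ρ τ hrel
      show (D.filter (fun τ' => Rel n i ρ τ')).card = (D.filter (fun τ' => Rel n i τ τ')).card
      congr 1
      apply Finset.filter_congr
      intro τ' _
      exact ⟨fun h => (hrel.symm).trans h, fun h => hrel.trans h⟩
    have hterm : ∀ τ, τ.support.card = s → ∀ ρ ∈ D,
        co ρ * (TT n i ρ) τ = if Rel n i ρ τ then x τ / (m τ : ℂ) else 0 := by
      intro τ hτs ρ hρ
      by_cases hrel : Rel n i ρ τ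
      · rw [if_pos hrel]
        have hN : (TT n i ρ) ρ ≠ 0 := TT_self_ne_zero (hDHi ρ hρ)
        have hTTτ : (TT n i ρ) τ = (TT n i ρ) ρ :=
          Rel.coeff_eq (fun g hg => TT_commute g hg) hrel
        have hxτ : x τ = x ρ := Rel.coeff_eq hxcomm hrel
        have hmρτ : m ρ = m τ := hmeq ρ τ hrel
        simp only [hco]
        rw [hTTτ, hxτ, hmρτ]
        have hfin : x ρ / ((TT n i ρ) ρ * ((m τ : ℕ) : ℂ)) * (TT n i ρ) ρ
            = x ρ / ((m τ : ℕ) : ℂ) * ((TT n i ρ) ρ / (TT n i ρ) ρ) := by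
          ring
        rw [hfin, div_self hN, mul_one]
      · rw [if_neg hrel]
        have hTT0 : (TT n i ρ) τ = 0 := by
          by_contra h0
          exact hrel (TT_top_rel (hDHi ρ hρ) h0 (by rw [hτs, hDmem_card ρ hρ]))
        rw [hTT0, mul_zero]
    have hybound : ∀ τ, y τ ≠ 0 → τ.support.card < s := by
      intro τ hyτ
      by_contra hcon
      push_neg at hcon
      apply hyτ
      rw [hyapply]
      rcases lt_or_eq_of_le hcon with hgt | heqcard
      · have hx0 : x τ = 0 := by
          by_contra h0
          have := hbound τ h0
          omega
        have hTT0 : ∀ ρ ∈ D, co ρ * (TT n i ρ) τ = 0 := by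
          intro ρ hρ
          have h0 : (TT n i ρ) τ = 0 := by
            by_contra h0
            have := TT_supp_card_le h0
            rw [hDmem_card ρ hρ] at this
            omega
          rw [h0, mul_zero]
        rw [hx0, Finset.sum_congr rfl hTT0, Finset.sum_const_zero, sub_zero]
      · have hτs : τ.support.card = s := heqcard.symm
        rw [Finset.sum_congr rfl (hterm τ hτs)]
        by_cases hτD : τ ∈ D
        · have hfilter_eq : D.filter (fun ρ => Rel n i ρ τ)
              = D.filter (fun τ' => Rel n i τ τ') := by
            apply Finset.filter_congr
            intro τ' _
            exact ⟨fun h => h.symm, fun h => h.symm⟩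
          rw [← Finset.sum_filter, Finset.sum_const, hfilter_eq]
          have hmτ : ((m τ : ℕ) : ℂ) ≠ 0 := by
            have hτmem : τ ∈ D.filter (fun τ' => Rel n i τ τ') :=
              Finset.mem_filter.2 ⟨hτD, Rel.refl τ⟩
            have hpos : m τ ≠ 0 := Finset.card_ne_zero_of_mem hτmem
            exact_mod_cast hpos
          rw [nsmul_eq_mul]
          have hmc : ((D.filter (fun τ' => Rel n i τ τ')).card : ℂ) = ((m τ : ℕ) : ℂ) := rfl
          rw [hmc]
          field_simp
          simp
        · have hx0 : x τ = 0 := by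
            by_contra h0
            exact hτD (Finset.mem_filter.2 ⟨Finsupp.mem_support_iff.2 h0, hτs⟩)
          rw [hx0]
          simp
    have hymem := ih y hycenter hybound
    have hxeq : x = y + ∑ ρ ∈ D, co ρ • TT n i ρ := by rw [hy]; abel
    rw [hxeq]
    exact add_mem hymem (Subalgebra.sum_mem _ fun ρ _ =>
      Subalgebra.smul_mem _ TT_mem_adjoin _)

end OV
end OVAux

/-- Okounkov–Vershik: the Gelfand–Zetlin algebra, i.e. the subalgebra generated by
`Z_1 ∪ ⋯ ∪ Z_n`, equals the subalgebra generated by the Jucys–Murphy elements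
`J_1, …, J_n`. -/
theorem gelfandZetlin_eq_adjoin_jm (n : ℕ) (hn : 1 ≤ n) :
    Algebra.adjoin ℂ (⋃ i ∈ Set.Icc 1 n, centerCopy n i) =
      Algebra.adjoin ℂ (Set.range (jm n)) := by
  apply le_antisymm
  · apply Algebra.adjoin_le
    intro x hx
    simp only [Set.mem_iUnion] at hx
    obtain ⟨i, _, hx⟩ := hx
    refine OV.center_in_adjoin (n + 1) x hx (fun τ _ => ?_)
    have h1 := Finset.card_le_univ τ.support
    rw [Fintype.card_fin] at h1
    omega
  · apply Algebra.adjoin_le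
    rintro _ ⟨k, rfl⟩
    by_cases hk : (k : ℕ) = 0
    · have hzero : jm n k = 0 := by
        rw [OV.jm_def]
        rw [show Finset.univ.filter (fun j : Fin n => j < k) = ∅ by
          ext j
          simp only [Finset.mem_filter, Finset.mem_univ, true_and, Finset.notMem_empty,
            iff_false, Fin.lt_def]
          omega]
        exact Finset.sum_empty
      rw [hzero]
      exact zero_mem _
    · have h1 : OV.Pp n ((k : ℕ) + 1) 1
          ∈ Algebra.adjoin ℂ (⋃ i ∈ Set.Icc 1 n, centerCopy n i) := by
        apply Algebra.subset_adjoin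
        have hmem : ((k : ℕ) + 1) ∈ Set.Icc 1 n := by
          have := k.isLt
          simp only [Set.mem_Icc]
          omega
        refine Set.mem_biUnion hmem ?_
        exact OV.mem_centerCopy_iff.2 ⟨OV.Pp_mem_copy, OV.Pp_commute _ 1⟩
      have h2 : OV.Pp n (k : ℕ) 1
          ∈ Algebra.adjoin ℂ (⋃ i ∈ Set.Icc 1 n, centerCopy n i) := by
        apply Algebra.subset_adjoin
        have hmem : ((k : ℕ)) ∈ Set.Icc 1 n := by
          have := k.isLt
          simp only [Set.mem_Icc]
          omega
        refine Set.mem_biUnion hmem ?_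
        exact OV.mem_centerCopy_iff.2 ⟨OV.Pp_mem_copy, OV.Pp_commute _ 1⟩
      rw [OV.jm_eq_sub k]
      exact sub_mem h1 h2
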